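/- Let {X_n} be i.i.d. random variables and ρ ∈ [0, ∞]. Then (log max_{1≤k≤n} X_k)/(log n) → 1/ρ almost surely if and only if (log max_{1≤k≤n} X_k)/(log n) → 1/ρ in probability. -/

import Mathlib

open MeasureTheory ProbabilityTheory Filter
open scoped ENNReal

/-- `log x = ln (e ∨ x)` as in the paper. -/
noncomputable def Log (x : ℝ) : ℝ := Real.log (max (Real.exp 1) x)

/-- `pmax X n ω = max_{1 ≤ k ≤ n} X_k(ω)` (indexed `0,…,n-1`), junk value at `n = 0`. -/
noncomputable def pmax {Ω : Type*} (X : ℕ → Ω → ℝ) (n : ℕ) (ω : Ω) : ℝ :=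
  if h : n = 0 then X 0 ω
  else (Finset.range n).sup' (Finset.nonempty_range_iff.mpr h) fun k => X k ω

lemma one_le_Log (x : ℝ) : 1 ≤ Log x := by
  rw [Log]
  calc (1:ℝ) = Real.log (Real.exp 1) := (Real.log_exp 1).symm
  _ ≤ _ := Real.log_le_log (Real.exp_pos 1) (le_max_left _ _)

lemma Log_pos (x : ℝ) : 0 < Log x := lt_of_lt_of_le one_pos (one_le_Log x)

lemma Log_mono : Monotone Log := fun x y h => Real.log_le_log (lt_of_lt_of_le (Real.exp_pos 1) (le_max_left _ _)) (max_le_max le_rfl h)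

lemma measurable_Log : Measurable Log :=
  Real.measurable_log.comp (measurable_const.max measurable_id)

lemma Log_le_iff {x u : ℝ} (hu : 1 ≤ u) : Log x ≤ u ↔ x ≤ Real.exp u := by
  rw [Log, Real.log_le_iff_le_exp (lt_of_lt_of_le (Real.exp_pos 1) (le_max_left _ _)), max_le_iff]
  constructor
  · exact fun h => h.2
  · exact fun h => ⟨Real.exp_le_exp.2 hu, h⟩

lemma Log_natCast_le_of_le {m n : ℕ} (h : m ≤ n) : Log m ≤ Log n :=
  Log_mono (Nat.cast_le.2 h)

lemma Log_two_pow {j : ℕ} (hj : 2 ≤ j) : Log ((2:ℕ)^j : ℕ) = j * Real.log 2 := by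
  rw [Log, max_eq_right, Nat.cast_pow, Real.log_pow]
  · norm_num
  · have h1 : Real.exp 1 ≤ 4 := by have := Real.exp_one_lt_d9; linarith
    have h2 : (4:ℝ) ≤ ((2:ℕ)^j : ℕ) := by
      push_cast
      calc (4:ℝ) = 2^2 := by norm_num
      _ ≤ 2^j := by exact pow_le_pow_right₀ one_le_two hj
    linarith

section PM
variable {Ω : Type*} {X : ℕ → Ω → ℝ} {n : ℕ} {ω : Ω}

noncomputable def Yf (X : ℕ → Ω → ℝ) (n : ℕ) (ω : Ω) : ℝ := Log (pmax X n ω) / Log n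

lemma pmax_le_iff (hn : n ≠ 0) {v : ℝ} : pmax X n ω ≤ v ↔ ∀ k < n, X k ω ≤ v := by
  rw [pmax, dif_neg hn, Finset.sup'_le_iff]
  simp [Finset.mem_range]

lemma le_pmax (hn : n ≠ 0) {k : ℕ} (h : k < n) : X k ω ≤ pmax X n ω := by
  rw [pmax, dif_neg hn]
  exact Finset.le_sup' (fun k => X k ω) (Finset.mem_range.2 h)

lemma exists_pmax_eq (hn : n ≠ 0) : ∃ k < n, pmax X n ω = X k ω := by
  rw [pmax, dif_neg hn]
  obtain ⟨k, hk, he⟩ := Finset.exists_mem_eq_sup' (Finset.nonempty_range_iff.mpr hn) (fun k => X k ω)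
  exact ⟨k, Finset.mem_range.1 hk, he⟩

lemma Log_pmax_le_iff (hn : n ≠ 0) {u : ℝ} :
    Log (pmax X n ω) ≤ u ↔ ∀ k < n, Log (X k ω) ≤ u := by
  constructor
  · intro h k hk
    exact le_trans (Log_mono (le_pmax hn hk)) h
  · intro h
    obtain ⟨k, hk, he⟩ := exists_pmax_eq (ω := ω) hn
    rw [he]; exact h k hk

lemma pmax_mono {m : ℕ} (hm : m ≠ 0) (hmn : m ≤ n) : pmax X m ω ≤ pmax X n ω := by
  have hn : n ≠ 0 := by omega
  rw [pmax_le_iff hm]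
  exact fun k hk => le_pmax hn (lt_of_lt_of_le hk hmn)

lemma measurable_pmax [MeasurableSpace Ω] (hX : ∀ k, Measurable (X k)) :
    Measurable (pmax X n) := by
  unfold pmax
  split_ifs with h
  · exact hX 0
  · have h2 := Finset.measurable_sup' (Finset.nonempty_range_iff.mpr h) (fun k (_ : k ∈ Finset.range n) => hX k)
    convert h2 using 1
    ext ω
    simp [Finset.sup'_apply]

lemma measurable_Yf [MeasurableSpace Ω] (hX : ∀ k, Measurable (X k)) :
    Measurable (Yf X n) :=
  (measurable_Log.comp (measurable_pmax hX)).div measurable_const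

lemma Yf_le_iff (hn : n ≠ 0) {a : ℝ} : Yf X n ω ≤ a ↔ Log (pmax X n ω) ≤ a * Log n := by
  rw [Yf, div_le_iff₀ (Log_pos _)]

lemma lt_Yf_iff (hn : n ≠ 0) {a : ℝ} : a < Yf X n ω ↔ a * Log n < Log (pmax X n ω) := by
  rw [Yf, lt_div_iff₀ (Log_pos _)]

lemma Yf_event_eq (hn : n ≠ 0) {a : ℝ} :
    {ω : Ω | Yf X n ω ≤ a} = ⋂ k ∈ Finset.range n, X k ⁻¹' {x | Log x ≤ a * Log (n:ℝ)} := by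
  ext ω
  simp only [Set.mem_setOf_eq, Set.mem_iInter, Set.mem_preimage, Finset.mem_range]
  rw [Yf_le_iff hn, Log_pmax_le_iff hn]

end PM

section Prob
variable {Ω : Type*} [MeasurableSpace Ω] {μ : Measure Ω} [IsProbabilityMeasure μ]
  {X : ℕ → Ω → ℝ}

lemma Smeas (u : ℝ) : MeasurableSet {x : ℝ | Log x ≤ u} :=
  measurableSet_le measurable_Log measurable_const

lemma Smeas' (u : ℝ) : MeasurableSet {x : ℝ | u < Log x} :=
  measurableSet_lt measurable_const measurable_Log

/-- identical one-dim marginals -/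
lemma meas_pre_eq (hident : ∀ n, IdentDistrib (X n) (X 0) μ μ) (k : ℕ) {s : Set ℝ}
    (hs : MeasurableSet s) : μ (X k ⁻¹' s) = μ (X 0 ⁻¹' s) :=
  (hident k).measure_mem_eq hs

lemma meas_biInter_eq (hindep : iIndepFun X μ)
    (hident : ∀ n, IdentDistrib (X n) (X 0) μ μ) (s : Finset ℕ) (u : ℝ) :
    μ (⋂ k ∈ s, X k ⁻¹' {x : ℝ | Log x ≤ u}) = μ (X 0 ⁻¹' {x : ℝ | Log x ≤ u}) ^ s.card := by
  rw [hindep.meas_biInter (fun k _ => ⟨{x : ℝ | Log x ≤ u}, Smeas u, rfl⟩)]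
  rw [Finset.prod_congr rfl (fun k _ => meas_pre_eq hident k (Smeas u)), Finset.prod_const]

lemma meas_Yf_le (hmeas : ∀ n, Measurable (X n))
    (hindep : iIndepFun X μ)
    (hident : ∀ n, IdentDistrib (X n) (X 0) μ μ) {n : ℕ} (hn : n ≠ 0) (a : ℝ) :
    μ {ω | Yf X n ω ≤ a} = μ (X 0 ⁻¹' {x : ℝ | Log x ≤ a * Log n}) ^ n := by
  rw [Yf_event_eq hn, meas_biInter_eq hindep hident, Finset.card_range]

lemma union_bound (hident : ∀ n, IdentDistrib (X n) (X 0) μ μ) {n : ℕ} (hn : n ≠ 0) (u : ℝ) :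
    μ {ω | u < Log (pmax X n ω)} ≤ n * μ (X 0 ⁻¹' {x : ℝ | u < Log x}) := by
  have hsub : {ω | u < Log (pmax X n ω)} ⊆ ⋃ k ∈ Finset.range n, X k ⁻¹' {x : ℝ | u < Log x} := by
    intro ω hω
    simp only [Set.mem_setOf_eq] at hω
    by_contra hcon
    simp only [Set.mem_iUnion, Set.mem_preimage, Set.mem_setOf_eq, Finset.mem_range, not_exists,
      not_lt] at hcon
    exact absurd ((Log_pmax_le_iff hn).2 hcon) (not_le.2 hω)
  calc μ {ω | u < Log (pmax X n ω)} ≤ μ (⋃ k ∈ Finset.range n, X k ⁻¹' {x : ℝ | u < Log x}) :=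
        measure_mono hsub
  _ ≤ ∑ k ∈ Finset.range n, μ (X k ⁻¹' {x : ℝ | u < Log x}) := measure_biUnion_finset_le _ _
  _ = n * μ (X 0 ⁻¹' {x : ℝ | u < Log x}) := by
      rw [Finset.sum_congr rfl (fun k _ => meas_pre_eq hident k (Smeas' u)), Finset.sum_const,
        Finset.card_range, nsmul_eq_mul]

end Prob

lemma Log_eq_log {x : ℝ} (hx : Real.exp 1 ≤ x) : Log x = Real.log x := by
  rw [Log, max_eq_right hx]

lemma exp_one_le_three : Real.exp 1 ≤ 3 := by
  have := Real.exp_one_lt_d9; linarith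

section Prob2
variable {Ω : Type*} [MeasurableSpace Ω] {μ : Measure Ω} [IsProbabilityMeasure μ]
  {X : ℕ → Ω → ℝ}

/-- real tail prob -/
noncomputable def Pt (X : ℕ → Ω → ℝ) (μ : Measure Ω) (u : ℝ) : ℝ :=
  (μ (X 0 ⁻¹' {x : ℝ | u < Log x})).toReal

lemma Pt_nonneg (u : ℝ) : 0 ≤ Pt X μ u := ENNReal.toReal_nonneg

lemma Pt_le_one (u : ℝ) : Pt X μ u ≤ 1 := by
  rw [Pt]
  exact ENNReal.toReal_le_of_le_ofReal one_pos.le (by simpa using prob_le_one)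

lemma Pt_anti {u v : ℝ} (h : u ≤ v) : Pt X μ v ≤ Pt X μ u := by
  apply ENNReal.toReal_mono (measure_ne_top _ _)
  exact measure_mono (fun x hx => lt_of_le_of_lt h hx)

lemma F_eq (hmeas : ∀ n, Measurable (X n)) (u : ℝ) :
    (μ (X 0 ⁻¹' {x : ℝ | Log x ≤ u})).toReal = 1 - Pt X μ u := by
  have hc : X 0 ⁻¹' {x : ℝ | Log x ≤ u} = (X 0 ⁻¹' {x : ℝ | u < Log x})ᶜ := by
    ext ω; simp [not_lt]
  rw [hc, prob_compl_eq_one_sub ((hmeas 0) (Smeas' u)), ENNReal.toReal_sub_of_le prob_le_one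
    ENNReal.one_ne_top, ENNReal.toReal_one, Pt]

lemma meas_Yf_le_toReal (hmeas : ∀ n, Measurable (X n))
    (hindep : iIndepFun X μ)
    (hident : ∀ n, IdentDistrib (X n) (X 0) μ μ) {n : ℕ} (hn : n ≠ 0) (a : ℝ) :
    (μ {ω | Yf X n ω ≤ a}).toReal = (1 - Pt X μ (a * Log n)) ^ n := by
  rw [meas_Yf_le hmeas hindep hident hn, ENNReal.toReal_pow, F_eq hmeas]

lemma union_bound' (hident : ∀ n, IdentDistrib (X n) (X 0) μ μ) {n : ℕ} (hn : n ≠ 0) (u : ℝ) :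
    μ {ω | u < Log (pmax X n ω)} ≤ ENNReal.ofReal ((n : ℝ) * Pt X μ u) := by
  refine le_trans (union_bound hident hn u) ?_
  rw [ENNReal.ofReal_mul (by positivity)]
  gcongr
  · simp [ENNReal.ofReal_natCast]
  · rw [Pt, ENNReal.ofReal_toReal (measure_ne_top _ _)]

end Prob2

section Step1
variable {Ω : Type*} [MeasurableSpace Ω] {μ : Measure Ω} [IsProbabilityMeasure μ]
  {X : ℕ → Ω → ℝ}

lemma compl_event (hmeas : ∀ n, Measurable (X n)) (n : ℕ) (a : ℝ) :
    μ {ω | a < Yf X n ω} = 1 - μ {ω | Yf X n ω ≤ a} := by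
  have hc : {ω | a < Yf X n ω} = {ω | Yf X n ω ≤ a}ᶜ := by
    ext ω; simp [not_le]
  rw [hc, prob_compl_eq_one_sub (measurableSet_le (measurable_Yf hmeas) measurable_const)]

/-- Step 1 for Lemma A : eventually `n * Pt (a * Log n) ≤ 1`. -/
lemma step1A (hmeas : ∀ n, Measurable (X n))
    (hindep : iIndepFun X μ)
    (hident : ∀ n, IdentDistrib (X n) (X 0) μ μ) {a : ℝ}
    (htend : Tendsto (fun n : ℕ => μ {ω | a < Yf X n ω}) atTop (nhds 0)) :
    ∀ᶠ n : ℕ in atTop, (n : ℝ) * Pt X μ (a * Log n) ≤ 1 := by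
  have hreal : Tendsto (fun n : ℕ => (μ {ω | a < Yf X n ω}).toReal) atTop (nhds 0) := by
    have := (ENNReal.tendsto_toReal (by simp)).comp htend
    exact this
  have hev : ∀ᶠ n : ℕ in atTop, (μ {ω | a < Yf X n ω}).toReal < 1 - Real.exp (-1) := by
    apply hreal.eventually_lt_const
    have : Real.exp (-1) < 1 := Real.exp_lt_one_iff.2 (by norm_num)
    linarith
  filter_upwards [hev, eventually_ne_atTop 0] with n hn hn0
  set P := Pt X μ (a * Log n) with hP
  have hF : (1 - P) ^ n = 1 - (μ {ω | a < Yf X n ω}).toReal := by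
    rw [compl_event hmeas, ENNReal.toReal_sub_of_le prob_le_one ENNReal.one_ne_top,
      ENNReal.toReal_one, meas_Yf_le_toReal hmeas hindep hident hn0]
    ring
  have h1 : Real.exp (-1) ≤ (1 - P) ^ n := by rw [hF]; linarith
  have h2 : (1 - P) ^ n ≤ Real.exp (-((n : ℝ) * P)) := by
    have hle : 1 - P ≤ Real.exp (-P) := by
      have := Real.add_one_le_exp (-P); linarith
    have h0 : (0 : ℝ) ≤ 1 - P := by
      nlinarith [Pt_le_one (X := X) (μ := μ) (a * Log n)]
    calc (1 - P) ^ n ≤ Real.exp (-P) ^ n := pow_le_pow_left₀ h0 hle n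
    _ = Real.exp (-((n : ℝ) * P)) := by
        rw [← Real.exp_nat_mul]; ring_nf
  have := Real.exp_le_exp.1 (h1.trans h2)
  linarith

/-- Step 1 for Lemma B : eventually `1/2 ≤ n * Pt (b * Log n)`. -/
lemma step1B (hmeas : ∀ n, Measurable (X n))
    (hindep : iIndepFun X μ)
    (hident : ∀ n, IdentDistrib (X n) (X 0) μ μ) {b : ℝ}
    (htend : Tendsto (fun n : ℕ => μ {ω | Yf X n ω ≤ b}) atTop (nhds 0)) :
    ∀ᶠ n : ℕ in atTop, (1 : ℝ) / 2 ≤ (n : ℝ) * Pt X μ (b * Log n) := by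
  have hreal : Tendsto (fun n : ℕ => (μ {ω | Yf X n ω ≤ b}).toReal) atTop (nhds 0) := by
    have := (ENNReal.tendsto_toReal (by simp)).comp htend
    exact this
  have hev : ∀ᶠ n : ℕ in atTop, (μ {ω | Yf X n ω ≤ b}).toReal < 1 / 2 :=
    hreal.eventually_lt_const (by norm_num)
  filter_upwards [hev, eventually_ne_atTop 0] with n hn hn0
  set P := Pt X μ (b * Log n) with hP
  have hF : (μ {ω | Yf X n ω ≤ b}).toReal = (1 - P) ^ n :=
    meas_Yf_le_toReal hmeas hindep hident hn0 b
  have hbern : 1 - (n : ℝ) * P ≤ (1 - P) ^ n := by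
    have h := one_add_mul_le_pow (a := -P) (by nlinarith [Pt_le_one (X := X) (μ := μ) (b * Log n)]) n
    calc 1 - (n : ℝ) * P = 1 + (n : ℝ) * (-P) := by ring
    _ ≤ (1 + -P) ^ n := h
    _ = (1 - P) ^ n := by ring_nf
  rw [hF] at hn
  linarith

end Step1

lemma tsum_ne_top_of_le {Ω : Type*} [MeasurableSpace Ω] {μ : Measure Ω} {s : ℕ → Set Ω}
    {g : ℕ → ℝ} (hg0 : ∀ j, 0 ≤ g j) (hgs : Summable g)
    (h : ∀ j, μ (s j) ≤ ENNReal.ofReal (g j)) : (∑' j, μ (s j)) ≠ ∞ := by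
  have h1 : (∑' j, μ (s j)) ≤ ∑' j, ENNReal.ofReal (g j) := ENNReal.tsum_le_tsum h
  rw [← ENNReal.ofReal_tsum_of_nonneg hg0 hgs] at h1
  exact ne_top_of_le_ne_top ENNReal.ofReal_ne_top h1

lemma summable_ifgeo {J : ℕ} {C r : ℝ} (hr0 : 0 ≤ r) (hr1 : r < 1) :
    Summable (fun j : ℕ => if j < J then (1 : ℝ) else C * r ^ j) := by
  rw [← summable_nat_add_iff J]
  have he : (fun j : ℕ => if j + J < J then (1 : ℝ) else C * r ^ (j + J))
      = fun j : ℕ => (C * r ^ J) * r ^ j := by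
    funext j
    rw [if_neg (by omega)]
    ring
  rw [he]
  exact (summable_geometric_of_lt_one hr0 hr1).mul_left _

lemma lemA {Ω : Type*} [MeasurableSpace Ω] {μ : Measure Ω} [IsProbabilityMeasure μ]
    {X : ℕ → Ω → ℝ} (hmeas : ∀ n, Measurable (X n))
    (hindep : iIndepFun X μ)
    (hident : ∀ n, IdentDistrib (X n) (X 0) μ μ)
    {a b : ℝ} (ha : 0 < a) (hab : a < b)
    (htend : Tendsto (fun n : ℕ => μ {ω | a < Yf X n ω}) atTop (nhds 0)) :
    ∀ᵐ ω ∂μ, ∀ᶠ n : ℕ in atTop, Yf X n ω ≤ b := by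
  obtain ⟨N₁, hN₁⟩ := eventually_atTop.1 (step1A hmeas hindep hident htend)
  have hb : 0 < b := ha.trans hab
  have hba : 1 < b / a := (one_lt_div ha).2 hab
  set r : ℝ := Real.exp (-((b / a - 1) * Real.log 2)) with hr
  have hr0 : 0 ≤ r := (Real.exp_pos _).le
  have hr1 : r < 1 := by
    rw [hr, Real.exp_lt_one_iff]
    nlinarith [Real.log_pos one_lt_two]
  set J₀ := N₁ + 4 with hJ₀
  set B : ℕ → Set Ω := fun j => {ω | b * Log ((2:ℕ)^j : ℕ) < Log (pmax X (2^(j+1)) ω)} with hB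
  have key : ∀ j, J₀ ≤ j → μ (B j) ≤ ENNReal.ofReal (4 * r ^ j) := by
    intro j hj
    have hj2 : 2 ≤ j := by omega
    set θ : ℝ := (b / a) * ((j : ℝ) * Real.log 2) with hθdef
    set m : ℕ := ⌊Real.exp θ⌋₊ with hm
    have hjlog2 : (0:ℝ) ≤ (j : ℝ) * Real.log 2 := by positivity
    have hθge : (j : ℝ) * Real.log 2 ≤ θ := by nlinarith
    have h2j : (2:ℝ) ^ j = Real.exp ((j : ℝ) * Real.log 2) := by
      rw [Real.exp_nat_mul, Real.exp_log two_pos]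
    have hexpθ : (2:ℝ) ^ j ≤ Real.exp θ := by
      rw [h2j]; exact Real.exp_le_exp.2 hθge
    have hm_ge : (2:ℕ)^j ≤ m := Nat.le_floor (by push_cast; exact hexpθ)
    have hj_lt : j + 1 ≤ 2 ^ j := Nat.lt_two_pow_self
    have hmN : N₁ ≤ m := by omega
    have hm5 : 5 ≤ m := by
      have : 2^2 ≤ 2^j := Nat.pow_le_pow_right (by norm_num) hj2
      omega
    have hm_exp : Real.exp 1 ≤ (m : ℝ) := by
      refine exp_one_le_three.trans ?_
      exact_mod_cast (by omega : 3 ≤ m)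
    have hLogm : Log (m : ℝ) = Real.log m := Log_eq_log hm_exp
    have hm_le : (m : ℝ) ≤ Real.exp θ := Nat.floor_le (Real.exp_pos _).le
    have hm_pos : (0:ℝ) < m := by positivity
    have hlogm : Real.log m ≤ θ := by
      calc Real.log m ≤ Real.log (Real.exp θ) := Real.log_le_log hm_pos hm_le
      _ = θ := Real.log_exp θ
    have hL2j : Log ((2:ℕ)^j : ℕ) = (j : ℝ) * Real.log 2 := Log_two_pow hj2
    have key1 : a * Log (m : ℝ) ≤ b * Log ((2:ℕ)^j : ℕ) := by
      rw [hL2j, hLogm]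
      have : a * θ = b * ((j:ℝ) * Real.log 2) := by
        rw [hθdef]; field_simp
      nlinarith
    have hP2 : (m : ℝ) * Pt X μ (a * Log m) ≤ 1 := hN₁ m hmN
    have hPm : Pt X μ (a * Log m) ≤ 1 / m := by
      rw [le_div_iff₀ hm_pos]
      linarith [hP2]
    have hexp2 : (2:ℝ) ≤ Real.exp θ := by
      calc (2:ℝ) ≤ (2:ℝ)^j := by
            calc (2:ℝ) = 2^1 := (pow_one 2).symm
            _ ≤ 2^j := pow_le_pow_right₀ one_le_two (by omega)
      _ ≤ Real.exp θ := hexpθ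
    have hm_half : Real.exp θ / 2 ≤ (m : ℝ) := by
      have := Nat.sub_one_lt_floor (Real.exp θ)
      rw [← hm] at this
      linarith
    have hinv : 1 / (m : ℝ) ≤ 2 * Real.exp (-θ) := by
      rw [div_le_iff₀ hm_pos]
      have hxy : Real.exp (-θ) * Real.exp θ = 1 := by
        rw [← Real.exp_add]; simp
      nlinarith [Real.exp_pos (-θ), hm_half]
    have hPfin : Pt X μ (b * Log ((2:ℕ)^j : ℕ)) ≤ 2 * Real.exp (-θ) :=
      le_trans (Pt_anti key1) (hPm.trans hinv)
    have hrj : r ^ j = Real.exp ((j:ℝ) * Real.log 2 - θ) := by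
      rw [hr, ← Real.exp_nat_mul]
      congr 1
      rw [hθdef]; ring
    have hbound : ((2^(j+1) : ℕ) : ℝ) * Pt X μ (b * Log ((2:ℕ)^j : ℕ)) ≤ 4 * r ^ j := by
      have hc : ((2^(j+1) : ℕ) : ℝ) = 2 * 2^j := by push_cast; ring
      rw [hc, hrj]
      have h2je : (2:ℝ)^j * Real.exp (-θ) = Real.exp ((j:ℝ) * Real.log 2 - θ) := by
        rw [h2j, ← Real.exp_add]; ring_nf
      calc 2 * (2:ℝ)^j * Pt X μ (b * Log ((2:ℕ)^j : ℕ)) ≤ 2 * (2:ℝ)^j * (2 * Real.exp (-θ)) := by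
            have h2jp : (0:ℝ) < 2 * 2^j := by positivity
            exact mul_le_mul_of_nonneg_left hPfin h2jp.le
      _ = 4 * ((2:ℝ)^j * Real.exp (-θ)) := by ring
      _ = 4 * Real.exp ((j:ℝ) * Real.log 2 - θ) := by rw [h2je]
    calc μ (B j) ≤ ENNReal.ofReal (((2^(j+1) : ℕ) : ℝ) * Pt X μ (b * Log ((2:ℕ)^j : ℕ))) :=
          union_bound' hident (by positivity) _
    _ ≤ ENNReal.ofReal (4 * r ^ j) := ENNReal.ofReal_le_ofReal hbound
  -- summability
  set g : ℕ → ℝ := fun j => if j < J₀ then (1:ℝ) else 4 * r ^ j with hg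
  have hg0 : ∀ j, 0 ≤ g j := by
    intro j
    simp only [hg]
    split_ifs
    · norm_num
    · positivity
  have hsum : (∑' j, μ (B j)) ≠ ∞ := by
    refine tsum_ne_top_of_le hg0 (summable_ifgeo hr0 hr1) (fun j => ?_)
    simp only [hg]
    split_ifs with h
    · simpa using prob_le_one
    · exact key j (by omega)
  filter_upwards [ae_eventually_notMem hsum] with ω hω
  obtain ⟨J₁, hJ₁⟩ := eventually_atTop.1 hω
  rw [eventually_atTop]
  refine ⟨2^(J₁+1), fun n hn => ?_⟩
  have hn0 : n ≠ 0 := by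
    have : 0 < 2^(J₁+1) := Nat.pow_pos (by norm_num)
    omega
  set j := Nat.log 2 n with hj
  have hj1 : 2^j ≤ n := Nat.pow_log_le_self 2 hn0
  have hj2 : n < 2^(j+1) := Nat.lt_pow_succ_log_self one_lt_two n
  have hjJ : J₁ ≤ j := by
    have := Nat.log_mono_right (b := 2) hn
    rw [Nat.log_pow one_lt_two] at this
    omega
  have hnotB := hJ₁ j hjJ
  simp only [hB, Set.mem_setOf_eq, not_lt] at hnotB
  rw [Yf_le_iff hn0]
  calc Log (pmax X n ω) ≤ Log (pmax X (2^(j+1)) ω) := Log_mono (pmax_mono hn0 hj2.le)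
  _ ≤ b * Log ((2:ℕ)^j : ℕ) := hnotB
  _ ≤ b * Log (n : ℝ) := mul_le_mul_of_nonneg_left (Log_natCast_le_of_le hj1) hb.le

lemma exp_quad {x : ℝ} (hx : 0 ≤ x) : x^2 / 4 ≤ Real.exp x := by
  have h1 : 1 + x/2 ≤ Real.exp (x/2) := by
    have := Real.add_one_le_exp (x/2); linarith
  have h2 : (1 + x/2)^2 ≤ Real.exp (x/2) ^ 2 := by
    apply pow_le_pow_left₀ (by linarith) h1
  have h3 : Real.exp (x/2) ^ 2 = Real.exp x := by
    rw [← Real.exp_nat_mul]; congr 1; push_cast; ring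
  nlinarith

set_option maxHeartbeats 1000000 in
lemma lemB {Ω : Type*} [MeasurableSpace Ω] {μ : Measure Ω} [IsProbabilityMeasure μ]
    {X : ℕ → Ω → ℝ} (hmeas : ∀ n, Measurable (X n))
    (hindep : iIndepFun X μ)
    (hident : ∀ n, IdentDistrib (X n) (X 0) μ μ)
    {a b : ℝ} (ha : 0 < a) (hab : a < b)
    (htend : Tendsto (fun n : ℕ => μ {ω | Yf X n ω ≤ b}) atTop (nhds 0)) :
    ∀ᵐ ω ∂μ, ∀ᶠ n : ℕ in atTop, a ≤ Yf X n ω := by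
  obtain ⟨N₁, hN₁⟩ := eventually_atTop.1 (step1B hmeas hindep hident htend)
  set c : ℝ := (a + b) / 2 with hc
  have hc0 : 0 < c := by rw [hc]; linarith
  have hac : a < c := by rw [hc]; linarith
  have hcb : c < b := by rw [hc]; linarith
  have hb : 0 < b := ha.trans hab
  have hcb1 : c / b < 1 := (div_lt_one hb).2 hcb
  have hcb0 : 0 < c / b := div_pos hc0 hb
  set γ : ℝ := 1 - c / b with hγ
  have hγ0 : 0 < γ := by rw [hγ]; linarith
  set K0 : ℝ := (1/4) * Real.exp (-((c/b) * Real.log 2)) with hK0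
  have hK00 : 0 < K0 := by positivity
  have hlog2 : 0 < Real.log 2 := Real.log_pos one_lt_two
  set C : ℕ → Set Ω := fun j =>
    ⋂ k ∈ Finset.Ico (2^j) (2^(j+1)), X k ⁻¹' {x : ℝ | Log x ≤ c * Log ((2:ℕ)^(j+1) : ℕ)} with hC
  set K : ℕ := max N₁ 3 with hK
  -- eventual conditions on j
  have hlin : Tendsto (fun j : ℕ => (c/b * Real.log 2) * (j:ℝ)) atTop atTop :=
    Tendsto.const_mul_atTop (by positivity) tendsto_natCast_atTop_atTop
  have E1 : ∀ᶠ j : ℕ in atTop, (K:ℝ) + 1 ≤ (c/b) * (((j:ℝ)+1) * Real.log 2) := by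
    filter_upwards [hlin.eventually_ge_atTop ((K:ℝ)+1)] with j hj
    calc (K:ℝ) + 1 ≤ (c/b * Real.log 2) * j := hj
    _ ≤ (c/b) * (((j:ℝ)+1) * Real.log 2) := by nlinarith
  have E2 : ∀ᶠ j : ℕ in atTop, 4 / (K0 * (γ * Real.log 2)^2) ≤ (j:ℝ) :=
    tendsto_natCast_atTop_atTop.eventually_ge_atTop _
  have key : ∀ᶠ j : ℕ in atTop, μ (C j) ≤ ENNReal.ofReal (Real.exp (-1) ^ j) := by
    filter_upwards [E1, E2, eventually_ge_atTop 1] with j hE1 hE2 hj1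
    set θ : ℝ := (c/b) * (((j:ℝ)+1) * Real.log 2) with hθdef
    set m : ℕ := ⌈Real.exp θ⌉₊ with hm
    have hθexp : θ + 1 ≤ Real.exp θ := Real.add_one_le_exp θ
    have hθ0 : 0 ≤ θ := by positivity
    have hexp1 : 1 ≤ Real.exp θ := Real.one_le_exp hθ0
    have hm_ge : Real.exp θ ≤ (m:ℝ) := Nat.le_ceil _
    have hmK : K ≤ m := by
      have h1 : (K:ℝ) ≤ (m:ℝ) := by linarith
      exact_mod_cast h1
    have hm3 : 3 ≤ m := le_trans (le_max_right _ _) hmK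
    have hmN₁ : N₁ ≤ m := le_trans (le_max_left _ _) hmK
    have hm_pos : (0:ℝ) < m := by
      have : (3:ℝ) ≤ (m:ℝ) := by exact_mod_cast hm3
      linarith
    have hm_exp : Real.exp 1 ≤ (m:ℝ) := exp_one_le_three.trans (by exact_mod_cast hm3)
    have hm_ub : (m:ℝ) ≤ 2 * Real.exp θ := by
      have := Nat.ceil_lt_add_one (Real.exp_pos θ).le
      have h2 : (m:ℝ) < Real.exp θ + 1 := this
      linarith
    have hLogm : Log (m:ℝ) = Real.log m := Log_eq_log hm_exp
    have hlogm : θ ≤ Real.log m := by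
      calc θ = Real.log (Real.exp θ) := (Real.log_exp θ).symm
      _ ≤ Real.log m := Real.log_le_log (Real.exp_pos θ) hm_ge
    have hL2j : Log ((2:ℕ)^(j+1) : ℕ) = ((j:ℝ)+1) * Real.log 2 := by
      rw [Log_two_pow (by omega)]; push_cast; ring
    have key1 : c * Log ((2:ℕ)^(j+1) : ℕ) ≤ b * Log (m:ℝ) := by
      rw [hL2j, hLogm]
      have hbt : b * θ = c * (((j:ℝ)+1) * Real.log 2) := by
        rw [hθdef]; field_simp
      nlinarith
    set P : ℝ := Pt X μ (c * Log ((2:ℕ)^(j+1) : ℕ)) with hP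
    have hP1 : Pt X μ (b * Log (m:ℝ)) ≤ P := Pt_anti key1
    have hP2 : (1:ℝ)/2 ≤ (m:ℝ) * Pt X μ (b * Log (m:ℝ)) := hN₁ m hmN₁
    have hPm : 1 / (2*(m:ℝ)) ≤ Pt X μ (b * Log (m:ℝ)) := by
      rw [div_le_iff₀ (by positivity)]
      nlinarith [Pt_nonneg (X := X) (μ := μ) (b * Log (m:ℝ))]
    have hPlow : Real.exp (-θ) / 4 ≤ P := by
      refine le_trans ?_ (hPm.trans hP1)
      have hexppos : 0 < Real.exp θ := Real.exp_pos θ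
      have hxy : Real.exp (-θ) * Real.exp θ = 1 := by rw [← Real.exp_add]; simp
      rw [div_le_div_iff₀ (by norm_num) (by positivity)]
      nlinarith
    -- lower bound 2^j * P ≥ j
    have h2j : (2:ℝ)^j = Real.exp ((j:ℝ) * Real.log 2) := by
      rw [Real.exp_nat_mul, Real.exp_log two_pos]
    have hXj : K0 * Real.exp (γ * Real.log 2 * (j:ℝ)) ≤ (2:ℝ)^j * P := by
      have hexps : (j:ℝ) * Real.log 2 + (-θ) = -((c/b) * Real.log 2) + γ * Real.log 2 * (j:ℝ) := by
        rw [hθdef, hγ]; ring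
      have heq : (2:ℝ)^j * (Real.exp (-θ) / 4) = K0 * Real.exp (γ * Real.log 2 * (j:ℝ)) := by
        calc (2:ℝ)^j * (Real.exp (-θ)/4) = Real.exp ((j:ℝ)*Real.log 2 + (-θ))/4 := by
              rw [Real.exp_add, h2j]; ring
        _ = Real.exp (-((c/b) * Real.log 2) + γ * Real.log 2 * (j:ℝ))/4 := by rw [hexps]
        _ = K0 * Real.exp (γ * Real.log 2 * (j:ℝ)) := by rw [hK0, Real.exp_add]; ring
      rw [← heq]
      have : (0:ℝ) < (2:ℝ)^j := by positivity
      nlinarith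
    have hquad : ((γ * Real.log 2 * (j:ℝ))^2) / 4 ≤ Real.exp (γ * Real.log 2 * (j:ℝ)) :=
      exp_quad (by positivity)
    have hjP : (j:ℝ) ≤ (2:ℝ)^j * P := by
      have hj0 : (1:ℝ) ≤ (j:ℝ) := by exact_mod_cast hj1
      have h4 : 4 / (K0 * (γ * Real.log 2)^2) ≤ (j:ℝ) := hE2
      have hd : 0 < K0 * (γ * Real.log 2)^2 := by positivity
      rw [div_le_iff₀ hd] at h4
      calc (j:ℝ) ≤ K0 * (γ * Real.log 2 * (j:ℝ))^2 / 4 := by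
            clear_value K0 γ θ m P
            have h5 := mul_le_mul_of_nonneg_right h4 (Nat.cast_nonneg (α := ℝ) j)
            have h6 : K0 * (γ * Real.log 2 * (j:ℝ))^2 = (j:ℝ) * (K0 * (γ * Real.log 2)^2) * (j:ℝ) := by
              ring
            linarith [h5, h6]
      _ ≤ K0 * Real.exp (γ * Real.log 2 * (j:ℝ)) := by nlinarith
      _ ≤ (2:ℝ)^j * P := hXj
    -- measure of block
    have hmeasC : (μ (C j)).toReal = (1 - P) ^ (2^j) := by
      simp only [hC]
      rw [meas_biInter_eq hindep hident, Nat.card_Ico, ENNReal.toReal_pow, F_eq hmeas]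
      congr 1
      rw [pow_succ]
      omega
    have hPle1 : P ≤ 1 := Pt_le_one _
    have hP0 : 0 ≤ P := Pt_nonneg _
    have hCle : (μ (C j)).toReal ≤ Real.exp (-1) ^ j := by
      rw [hmeasC]
      calc (1 - P) ^ (2^j) ≤ Real.exp (-P) ^ (2^j) := by
            apply pow_le_pow_left₀ (by linarith)
            have := Real.add_one_le_exp (-P); linarith
      _ = Real.exp (-(((2:ℕ)^j : ℝ) * P)) := by
            rw [← Real.exp_nat_mul]; push_cast; ring_nf
      _ ≤ Real.exp (-(j:ℝ)) := by
            apply Real.exp_le_exp.2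
            have : ((2:ℕ)^j : ℝ) = (2:ℝ)^j := by push_cast; ring
            rw [this]
            linarith
      _ = Real.exp (-1) ^ j := by rw [← Real.exp_nat_mul]; ring_nf
    calc μ (C j) = ENNReal.ofReal ((μ (C j)).toReal) :=
          (ENNReal.ofReal_toReal (measure_ne_top _ _)).symm
    _ ≤ ENNReal.ofReal (Real.exp (-1) ^ j) := ENNReal.ofReal_le_ofReal hCle
  -- summability & Borel-Cantelli
  obtain ⟨J₀, hJ₀⟩ := eventually_atTop.1 key
  have hr0 : (0:ℝ) ≤ Real.exp (-1) := (Real.exp_pos _).le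
  have hr1 : Real.exp (-1) < 1 := Real.exp_lt_one_iff.2 (by norm_num)
  have hsum : (∑' j, μ (C j)) ≠ ∞ := by
    have hg0 : ∀ j : ℕ, 0 ≤ (if j < J₀ then (1:ℝ) else Real.exp (-1) ^ j) := by
      intro j
      split_ifs
      · norm_num
      · positivity
    have hgs : Summable (fun j : ℕ => if j < J₀ then (1:ℝ) else Real.exp (-1) ^ j) := by
      have h := summable_ifgeo (J := J₀) (C := (1:ℝ)) hr0 hr1
      simpa using h
    refine tsum_ne_top_of_le hg0 hgs (fun j => ?_)
    split_ifs with h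
    · simpa using prob_le_one
    · exact hJ₀ j (by omega)
  -- condition for the index comparison
  have E4 : ∀ᶠ j : ℕ in atTop, a * ((j:ℝ)+2) ≤ c * ((j:ℝ)+1) := by
    have hlin2 : Tendsto (fun j : ℕ => (c - a) * (j:ℝ)) atTop atTop :=
      Tendsto.const_mul_atTop (by linarith) tendsto_natCast_atTop_atTop
    filter_upwards [hlin2.eventually_ge_atTop (2*a - c)] with j hj
    nlinarith
  obtain ⟨J₂, hJ₂⟩ := eventually_atTop.1 E4
  filter_upwards [ae_eventually_notMem hsum] with ω hω
  obtain ⟨J₁, hJ₁⟩ := eventually_atTop.1 hω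
  rw [eventually_atTop]
  set J₃ : ℕ := max (max J₁ J₂) 1 with hJ₃
  refine ⟨2^(J₃+2), fun n hn => ?_⟩
  have hn0 : n ≠ 0 := by
    have : 0 < 2^(J₃+2) := Nat.pow_pos (by norm_num)
    omega
  have hlogn : J₃ + 2 ≤ Nat.log 2 n := by
    have := Nat.log_mono_right (b := 2) hn
    rwa [Nat.log_pow one_lt_two] at this
  set j : ℕ := Nat.log 2 n - 1 with hjdef
  have hjsucc : j + 1 = Nat.log 2 n := by omega
  have hj1 : 2^(j+1) ≤ n := by
    rw [hjsucc]; exact Nat.pow_log_le_self 2 hn0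
  have hj2 : n < 2^(j+2) := by
    have := Nat.lt_pow_succ_log_self one_lt_two n
    rwa [← hjsucc] at this
  have hjJ₁ : J₁ ≤ j := by omega
  have hjJ₂ : J₂ ≤ j := by omega
  have hnotC := hJ₁ j hjJ₁
  simp only [hC, Set.mem_iInter, Set.mem_preimage, Set.mem_setOf_eq, not_forall] at hnotC
  obtain ⟨k, hk, hkgt⟩ := hnotC
  push_neg at hkgt
  rw [Finset.mem_Ico] at hk
  have hkn : k < n := lt_of_lt_of_le hk.2 hj1
  have hLX : c * Log ((2:ℕ)^(j+1) : ℕ) < Log (pmax X n ω) :=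
    lt_of_lt_of_le hkgt (Log_mono (le_pmax hn0 hkn))
  have hL2j1 : Log ((2:ℕ)^(j+1) : ℕ) = ((j:ℝ)+1) * Real.log 2 := by
    rw [Log_two_pow (by omega)]; push_cast; ring
  have hL2j2 : Log ((2:ℕ)^(j+2) : ℕ) = ((j:ℝ)+2) * Real.log 2 := by
    rw [Log_two_pow (by omega)]; push_cast; ring
  have hLn : Log (n:ℝ) ≤ ((j:ℝ)+2) * Real.log 2 := by
    rw [← hL2j2]; exact Log_natCast_le_of_le hj2.le
  have hfin : a * Log (n:ℝ) ≤ Log (pmax X n ω) := by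
    calc a * Log (n:ℝ) ≤ a * (((j:ℝ)+2) * Real.log 2) :=
          mul_le_mul_of_nonneg_left hLn ha.le
    _ ≤ c * (((j:ℝ)+1) * Real.log 2) := by
        have := hJ₂ j hjJ₂; nlinarith
    _ ≤ Log (pmax X n ω) := by rw [← hL2j1]; exact hLX.le
  rw [Yf, le_div_iff₀ (Log_pos _)]
  exact hfin

lemma fwd {Ω : Type*} [MeasurableSpace Ω] {μ : Measure Ω} [IsProbabilityMeasure μ]
    {X : ℕ → Ω → ℝ} (hmeas : ∀ n, Measurable (X n)) {L : ℝ≥0∞}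
    (h : ∀ᵐ ω ∂μ, Tendsto (fun n : ℕ => ENNReal.ofReal (Yf X n ω)) atTop (nhds L)) :
    ∀ U ∈ nhds L, Tendsto (fun n : ℕ =>
      μ {ω | ENNReal.ofReal (Yf X n ω) ∉ U}) atTop (nhds 0) := by
  intro U hU
  obtain ⟨V, hVU, hVopen, hLV⟩ := mem_nhds_iff.1 hU
  have hfm : ∀ m : ℕ, Measurable (fun ω => ENNReal.ofReal (Yf X m ω)) := fun m =>
    ENNReal.measurable_ofReal.comp (measurable_Yf hmeas)
  set E : ℕ → Set Ω := fun n => ⋃ m, ⋃ (_ : n ≤ m), {ω | ENNReal.ofReal (Yf X m ω) ∈ Vᶜ}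
    with hE
  have hEmeas : ∀ n, MeasurableSet (E n) := by
    intro n
    refine MeasurableSet.iUnion (fun m => MeasurableSet.iUnion (fun _ => ?_))
    exact (hfm m) hVopen.measurableSet.compl
  have hanti : Antitone E := by
    intro n n' hnn'
    simp only [hE]
    refine Set.iUnion_mono (fun m => ?_)
    exact Set.iUnion_subset (fun h' => Set.subset_iUnion_of_subset (le_trans hnn' h') le_rfl)
  have hnull : μ (⋂ n, E n) = 0 := by
    refine measure_mono_null ?_ (ae_iff.1 h)
    intro ω hω
    simp only [Set.mem_iInter, hE, Set.mem_iUnion, Set.mem_setOf_eq, Set.mem_compl_iff] at hω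
    simp only [Set.mem_setOf_eq]
    intro htd
    have hev := htd.eventually (hVopen.mem_nhds hLV)
    obtain ⟨N, hN⟩ := eventually_atTop.1 hev
    obtain ⟨m, hm, hmV⟩ := hω N
    exact hmV (hN m hm)
  have htd := tendsto_measure_iInter_atTop (fun n => (hEmeas n).nullMeasurableSet) hanti
    ⟨0, measure_ne_top μ _⟩
  rw [hnull] at htd
  refine tendsto_of_tendsto_of_tendsto_of_le_of_le tendsto_const_nhds htd
    (fun n => zero_le) (fun n => measure_mono ?_)
  intro ω hω
  simp only [Set.mem_setOf_eq] at hω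
  simp only [hE, Set.mem_iUnion, Set.mem_setOf_eq, Set.mem_compl_iff]
  exact ⟨n, le_rfl, fun hV => hω (hVU hV)⟩

lemma Yf_pos {Ω : Type*} {X : ℕ → Ω → ℝ} {n : ℕ} {ω : Ω} : 0 < Yf X n ω :=
  div_pos (Log_pos _) (Log_pos _)

theorem stmt9 {Ω : Type*} [MeasurableSpace Ω] (μ : Measure Ω) [IsProbabilityMeasure μ]
    (X : ℕ → Ω → ℝ) (hmeas : ∀ n, Measurable (X n))
    (hindep : iIndepFun X μ)
    (hident : ∀ n, IdentDistrib (X n) (X 0) μ μ)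
    (ρ : ℝ≥0∞) :
    (∀ᵐ ω ∂μ,
        Tendsto (fun n : ℕ => ENNReal.ofReal (Log (pmax X n ω) / Log n)) atTop (nhds ρ⁻¹)) ↔
    (∀ U ∈ nhds ρ⁻¹,
        Tendsto (fun n : ℕ =>
          μ {ω | ENNReal.ofReal (Log (pmax X n ω) / Log n) ∉ U}) atTop (nhds 0)) := by
  set L : ℝ≥0∞ := ρ⁻¹ with hLdef
  constructor
  · exact fun h => fwd hmeas h
  · intro hP
    by_cases hL : L = ⊤
    · -- case ρ⁻¹ = ∞
      have hlower : ∀ k : ℕ, ∀ᵐ ω ∂μ, ∀ᶠ n : ℕ in atTop, ((k:ℝ)+1) ≤ Yf X n ω := by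
        intro k
        refine lemB hmeas hindep hident (a := (k:ℝ)+1) (b := (k:ℝ)+2) (by positivity)
          (by linarith) ?_
        have hU := hP (Set.Ioi ((k:ℝ≥0∞)+2)) (by
          rw [hL]
          refine Ioi_mem_nhds (lt_top_iff_ne_top.2 ?_)
          simp)
        refine tendsto_of_tendsto_of_tendsto_of_le_of_le tendsto_const_nhds hU
          (fun n => zero_le) (fun n => measure_mono ?_)
        intro ω hω
        simp only [Set.mem_setOf_eq] at hω ⊢
        intro hmem
        rw [Set.mem_Ioi] at hmem
        have : ENNReal.ofReal (Yf X n ω) ≤ ((k:ℝ≥0∞)+2) := by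
          calc ENNReal.ofReal (Yf X n ω) ≤ ENNReal.ofReal ((k:ℝ)+2) :=
                ENNReal.ofReal_le_ofReal hω
          _ = (k:ℝ≥0∞)+2 := by
              rw [ENNReal.ofReal_add (by positivity) (by norm_num)]
              simp [ENNReal.ofReal_natCast]
        exact absurd hmem (not_lt.2 this)
      rw [← ae_all_iff] at hlower
      filter_upwards [hlower] with ω hω
      rw [hL, ENNReal.tendsto_nhds_top_iff_nat]
      intro k
      filter_upwards [hω k] with n hn
      calc (k:ℝ≥0∞) < (k:ℝ≥0∞) + 1 := ENNReal.lt_add_right (by simp) one_ne_zero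
      _ = ENNReal.ofReal ((k:ℝ)+1) := by
          rw [ENNReal.ofReal_add (by positivity) (by norm_num)]
          simp [ENNReal.ofReal_natCast]
      _ ≤ ENNReal.ofReal (Yf X n ω) := ENNReal.ofReal_le_ofReal hn
    · -- case ρ⁻¹ finite
      set t : ℝ := L.toReal with ht
      have hLt : ENNReal.ofReal t = L := ENNReal.ofReal_toReal hL
      have ht0 : 0 ≤ t := ENNReal.toReal_nonneg
      have hupper : ∀ k : ℕ, ∀ᵐ ω ∂μ, ∀ᶠ n : ℕ in atTop, Yf X n ω ≤ t + 2/((k:ℝ)+1) := by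
        intro k
        have hk1 : (0:ℝ) < 1/((k:ℝ)+1) := by positivity
        refine lemA hmeas hindep hident (a := t + 1/((k:ℝ)+1)) (b := t + 2/((k:ℝ)+1))
          (by positivity) (by
            have h12 : 1/((k:ℝ)+1) < 2/((k:ℝ)+1) :=
              div_lt_div_of_pos_right (by norm_num) (by positivity)
            linarith) ?_
        have hU := hP (Set.Iio (L + ENNReal.ofReal (1/((k:ℝ)+1)))) (by
          refine Iio_mem_nhds (ENNReal.lt_add_right hL ?_)
          simp only [ne_eq, ENNReal.ofReal_eq_zero, not_le]
          exact hk1)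
        refine tendsto_of_tendsto_of_tendsto_of_le_of_le tendsto_const_nhds hU
          (fun n => zero_le) (fun n => measure_mono ?_)
        intro ω hω
        simp only [Set.mem_setOf_eq] at hω ⊢
        intro hmem
        rw [Set.mem_Iio] at hmem
        have : L + ENNReal.ofReal (1/((k:ℝ)+1)) ≤ ENNReal.ofReal (Yf X n ω) := by
          calc L + ENNReal.ofReal (1/((k:ℝ)+1))
              = ENNReal.ofReal (t + 1/((k:ℝ)+1)) := by
                rw [ENNReal.ofReal_add ht0 hk1.le, hLt]
          _ ≤ ENNReal.ofReal (Yf X n ω) := ENNReal.ofReal_le_ofReal hω.le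
        exact absurd hmem (not_lt.2 this)
      rw [← ae_all_iff] at hupper
      by_cases hL0 : L = 0
      · -- limit 0 : lower bound trivial
        filter_upwards [hupper] with ω hω
        have htd : Tendsto (fun n : ℕ => Yf X n ω) atTop (nhds t) := by
          rw [tendsto_order]
          constructor
          · intro a' ha'
            have : t = 0 := by rw [ht, hL0]; simp
            rw [this] at ha'
            exact Eventually.of_forall (fun n => lt_of_lt_of_le ha' Yf_pos.le)
          · intro b' hb'
            obtain ⟨k, hk⟩ := exists_nat_one_div_lt (ε := (b' - t)/2) (by linarith)
            filter_upwards [hω k] with n hn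
            have : 2/((k:ℝ)+1) < b' - t := by
              rw [div_lt_iff₀ (by positivity)] at hk ⊢
              linarith
            linarith
        have := ENNReal.tendsto_ofReal htd
        rwa [hLt] at this
      · -- limit positive
        have htpos : 0 < t := ENNReal.toReal_pos hL0 hL
        have hlower : ∀ k : ℕ, ∀ᵐ ω ∂μ, ∀ᶠ n : ℕ in atTop,
            t*((k:ℝ)+1)/((k:ℝ)+3) ≤ Yf X n ω := by
          intro k
          have hk3 : (0:ℝ) < (k:ℝ)+3 := by positivity
          have hblt : t*((k:ℝ)+2)/((k:ℝ)+3) < t := by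
            rw [div_lt_iff₀ hk3]
            nlinarith
          refine lemB hmeas hindep hident (a := t*((k:ℝ)+1)/((k:ℝ)+3))
            (b := t*((k:ℝ)+2)/((k:ℝ)+3)) (by positivity)
            (div_lt_div_of_pos_right (by nlinarith) hk3) ?_
          have hU := hP (Set.Ioi (ENNReal.ofReal (t*((k:ℝ)+2)/((k:ℝ)+3)))) (by
            refine Ioi_mem_nhds ?_
            rw [← hLt]
            exact (ENNReal.ofReal_lt_ofReal_iff htpos).2 hblt)
          refine tendsto_of_tendsto_of_tendsto_of_le_of_le tendsto_const_nhds hU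
            (fun n => zero_le) (fun n => measure_mono ?_)
          intro ω hω
          simp only [Set.mem_setOf_eq] at hω ⊢
          intro hmem
          rw [Set.mem_Ioi] at hmem
          exact absurd hmem (not_lt.2 (ENNReal.ofReal_le_ofReal hω))
        rw [← ae_all_iff] at hlower
        filter_upwards [hupper, hlower] with ω hω1 hω2
        have htd : Tendsto (fun n : ℕ => Yf X n ω) atTop (nhds t) := by
          rw [tendsto_order]
          constructor
          · intro a' ha'
            obtain ⟨k, hk⟩ := exists_nat_one_div_lt (ε := (t - a')/(2*t))
              (div_pos (by linarith) (by linarith))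
            filter_upwards [hω2 k] with n hn
            have e1 : 2*t/((k:ℝ)+3) ≤ 2*t/((k:ℝ)+1) :=
              div_le_div_of_nonneg_left (by linarith) (by positivity) (by linarith)
            have e2 : 2*t*(1/((k:ℝ)+1)) < 2*t*((t-a')/(2*t)) :=
              mul_lt_mul_of_pos_left hk (by linarith)
            have e3 : 2*t*((t-a')/(2*t)) = t - a' := by field_simp
            have e5 : 2*t/((k:ℝ)+1) = 2*t*(1/((k:ℝ)+1)) := by ring
            have h1 : 2*t/((k:ℝ)+3) < t - a' := by linarith
            have e4 : t*((k:ℝ)+1)/((k:ℝ)+3) = t - 2*t/((k:ℝ)+3) := by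
              field_simp
              ring
            linarith
          · intro b' hb'
            obtain ⟨k, hk⟩ := exists_nat_one_div_lt (ε := (b' - t)/2) (by linarith)
            filter_upwards [hω1 k] with n hn
            have : 2/((k:ℝ)+1) < b' - t := by
              rw [div_lt_iff₀ (by positivity)] at hk ⊢
              linarith
            linarith
        have := ENNReal.tendsto_ofReal htd
        rwa [hLt] at this
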